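/- Truthfulness adjustment in the uniform price auction: for any fixed adversary bid vector β ∈ [0,1]^K (non-increasing) and any non-increasing bid vector b, the modified bid vector b̃ with b̃_1 = v_1 and b̃_k = min(b_k, v_k) for k ≥ 2 satisfies u(b̃, β) ≥ u(b, β), where u is the uniform-price utility with marginal valuations v_1 ≥ ... ≥ v_K. In particular, capping each bid component at the corresponding valuation never decreases the pointwise utility. -/

import Mathlib

open scoped Classical

/-- Allocation in the K-item standard auction. -/
noncomputable def alloc (K : ℕ) (b β : ℕ → ℝ) : ℕ :=
  Nat.findGreatest (fun k => ∀ j, 1 ≤ j → j ≤ k → β (K + 1 - j) ≤ b j) K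

/-- Uniform price: the (K+1)-th highest bid overall. -/
noncomputable def price (K : ℕ) (b β : ℕ → ℝ) : ℝ :=
  max (b (alloc K b β + 1)) (β (K - alloc K b β + 1))

/-- Uniform-price utility. -/
noncomputable def util (K : ℕ) (v b β : ℕ → ℝ) : ℝ :=
  ∑ l ∈ Finset.Icc 1 (alloc K b β), (v l - price K b β)

lemma alloc_le (K : ℕ) (b β : ℕ → ℝ) : alloc K b β ≤ K :=
  @Nat.findGreatest_le (fun k => ∀ j, 1 ≤ j → j ≤ k → β (K + 1 - j) ≤ b j)
    (fun _ => Classical.propDecidable _) K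

lemma alloc_spec (K : ℕ) (b β : ℕ → ℝ) :
    ∀ j, 1 ≤ j → j ≤ alloc K b β → β (K + 1 - j) ≤ b j :=
  @Nat.findGreatest_spec 0 (fun k => ∀ j, 1 ≤ j → j ≤ k → β (K + 1 - j) ≤ b j)
    (fun _ => Classical.propDecidable _) K
    (Nat.zero_le K) (fun j hj1 (hj0 : j ≤ 0) => absurd (hj1.trans hj0) (by omega))

lemma alloc_fail (K : ℕ) (b β : ℕ → ℝ) (h : alloc K b β < K) :
    b (alloc K b β + 1) < β (K - alloc K b β) := by
  have hng0 := @Nat.findGreatest_is_greatest (alloc K b β + 1)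
    (fun k => ∀ j, 1 ≤ j → j ≤ k → β (K + 1 - j) ≤ b j)
    (fun _ => Classical.propDecidable _) K
    (Nat.lt_succ_self (alloc K b β)) (by omega)
  have hng : ¬ ∀ j, 1 ≤ j → j ≤ alloc K b β + 1 → β (K + 1 - j) ≤ b j := hng0
  push_neg at hng
  obtain ⟨j, hj1, hj2, hj3⟩ := hng
  rcases Nat.lt_or_ge j (alloc K b β + 1) with hlt | hge
  · exact absurd (alloc_spec K b β j hj1 (by omega)) (not_le.mpr hj3)
  · have hje : j = alloc K b β + 1 := le_antisymm hj2 hge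
    subst hje
    have : K + 1 - (alloc K b β + 1) = K - alloc K b β := by omega
    rwa [this] at hj3

/-- Truthfulness adjustment: replacing the first bid by `v 1` and capping every other
bid at the corresponding valuation never decreases the pointwise uniform-price utility. -/
theorem uniform_cap_bids_pointwise (K : ℕ) (v b β : ℕ → ℝ)
    (hK : 1 ≤ K)
    (hv : ∀ i j, 1 ≤ i → i ≤ j → j ≤ K → v j ≤ v i)
    (hv01 : ∀ i, 1 ≤ i → i ≤ K → v i ∈ Set.Icc (0:ℝ) 1)
    (hb : ∀ i j, 1 ≤ i → i ≤ j → j ≤ K → b j ≤ b i)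
    (hb01 : ∀ i, 1 ≤ i → i ≤ K → b i ∈ Set.Icc (0:ℝ) 1)
    (hβ : ∀ i j, 1 ≤ i → i ≤ j → j ≤ K → β j ≤ β i)
    (hβ01 : ∀ i, 1 ≤ i → i ≤ K → β i ∈ Set.Icc (0:ℝ) 1)
    (hbK1 : b (K + 1) = 0) :
    util K v b β
      ≤ util K v (fun k => if k = 1 then v 1 else if k ≤ K then min (b k) (v k) else 0) β := by
  set b' : ℕ → ℝ := fun k => if k = 1 then v 1 else if k ≤ K then min (b k) (v k) else 0 with hb'
  set x := alloc K b β with hx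
  set x' := alloc K b' β with hx'
  have hxK : x ≤ K := alloc_le K b β
  have hx'K : x' ≤ K := alloc_le K b' β
  have hspec : ∀ j, 1 ≤ j → j ≤ x → β (K + 1 - j) ≤ b j := alloc_spec K b β
  have hspec' : ∀ j, 1 ≤ j → j ≤ x' → β (K + 1 - j) ≤ b' j := alloc_spec K b' β
  -- b' is dominated by v on [1,K]
  have hb'v : ∀ l, 1 ≤ l → l ≤ K → b' l ≤ v l := by
    intro l h1 hKl
    by_cases hl1 : l = 1
    · simp [hb', hl1]
    · simp [hb', hl1, hKl]
  -- b' is dominated by b on [2, K+1]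
  have hb'b : ∀ l, 2 ≤ l → l ≤ K + 1 → b' l ≤ b l := by
    intro l h2 hKl
    by_cases hl : l ≤ K
    · have hl1 : l ≠ 1 := by omega
      simp [hb', hl1, hl]
    · have hle : l = K + 1 := by omega
      have hK0 : ¬ K = 0 := by omega
      simp [hb', hl, hle, hbK1, hK0]
  -- every term in util for b' is nonnegative
  have hterm' : ∀ l ∈ Finset.Icc 1 x', 0 ≤ v l - price K b' β := by
    intro l hl
    rw [Finset.mem_Icc] at hl
    have hx'1 : 1 ≤ x' := le_trans hl.1 hl.2
    have hvx' : price K b' β ≤ v x' := by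
      apply max_le
      · by_cases hc : x' + 1 ≤ K
        · exact le_trans (hb'v (x' + 1) (by omega) hc)
            (hv x' (x' + 1) hx'1 (by omega) hc)
        · have he : x' = K := by omega
          have : b' (x' + 1) = 0 := by
            have hK0 : ¬ K = 0 := by omega
            simp [hb', he, hK0]
          rw [this]
          exact (hv01 x' hx'1 hx'K).1
      · have h1 : β (K + 1 - x') ≤ b' x' := hspec' x' hx'1 le_rfl
        have h2 : b' x' ≤ v x' := hb'v x' hx'1 hx'K
        have he : K - x' + 1 = K + 1 - x' := by omega
        rw [he]
        exact le_trans h1 h2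
    have : v x' ≤ v l := hv l x' hl.1 hl.2 hx'K
    linarith
  rcases Nat.eq_zero_or_pos x with hx0 | hx1
  · -- x = 0 : util b = 0, util b' ≥ 0
    have h1 : util K v b β = 0 := by
      unfold util
      rw [← hx, hx0]
      simp
    rw [h1]
    exact Finset.sum_nonneg hterm'
  · -- x ≥ 1 : first, x' ≤ x
    have hxx' : x' ≤ x := by
      by_contra hcon
      push_neg at hcon
      have hxK' : x < K := lt_of_lt_of_le hcon hx'K
      have h1 : β (K + 1 - (x + 1)) ≤ b' (x + 1) := hspec' (x + 1) (by omega) hcon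
      have h2 : b' (x + 1) ≤ b (x + 1) := hb'b (x + 1) (by omega) (by omega)
      have h3 : b (x + 1) < β (K - x) := alloc_fail K b β hxK'
      have he : K + 1 - (x + 1) = K - x := by omega
      rw [he] at h1
      linarith
    rcases eq_or_lt_of_le hxx' with heq | hlt
    · -- x' = x : same allocation, lower price
      have hp : price K b' β ≤ price K b β := by
        unfold price
        rw [← hx, ← hx', heq]
        exact max_le_max (hb'b (x + 1) (by omega) (by omega)) le_rfl
      unfold util
      rw [← hx, ← hx', heq]
      apply Finset.sum_le_sum
      intro l hl
      linarith
    · -- x' < x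
      have hx'K' : x' < K := lt_of_lt_of_le hlt hxK
      have hfail' : b' (x' + 1) < β (K - x') := alloc_fail K b' β hx'K'
      have hvsmall : v (x' + 1) < β (K - x') := by
        rcases Nat.eq_zero_or_pos x' with h0 | h1
        · have : b' (0 + 1) = v 1 := by simp [hb']
          rw [h0] at hfail' ⊢
          rwa [this] at hfail'
        · have hle : x' + 1 ≤ K := by omega
          have hne : x' + 1 ≠ 1 := by omega
          have hbe : b' (x' + 1) = min (b (x' + 1)) (v (x' + 1)) := by
            simp [hb', hne, hle, h1.ne']
          have hbb : β (K - x') ≤ b (x' + 1) := by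
            have := hspec (x' + 1) (by omega) hlt
            have he : K + 1 - (x' + 1) = K - x' := by omega
            rwa [he] at this
          rw [hbe] at hfail'
          by_contra hcc
          push_neg at hcc
          exact absurd (le_min hbb hcc) (not_le.mpr hfail')
      have hpβ : β (K - x') ≤ price K b β := by
        have h1 : β (K - x') ≤ β (K - x + 1) :=
          hβ (K - x + 1) (K - x') (by omega) (by omega) (by omega)
        exact le_trans h1 (le_max_right _ _)
      -- drop the negative tail of util b
      have hub : util K v b β ≤ ∑ l ∈ Finset.Icc 1 x', (v l - price K b β) := by
        have hsub : Finset.Icc 1 x' ⊆ Finset.Icc 1 x := Finset.Icc_subset_Icc_right hxx'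
        have hnn : ∀ i ∈ Finset.Icc 1 x, i ∉ Finset.Icc 1 x' →
            0 ≤ price K b β - v i := by
          intro i hi hni
          rw [Finset.mem_Icc] at hi
          rw [Finset.mem_Icc] at hni
          have hgt : x' + 1 ≤ i := by omega
          have : v i ≤ v (x' + 1) := hv (x' + 1) i (by omega) hgt (le_trans hi.2 hxK)
          linarith
        have hmono := Finset.sum_le_sum_of_subset_of_nonneg hsub hnn
        have e1 : ∑ l ∈ Finset.Icc 1 x, (v l - price K b β)
            + ∑ l ∈ Finset.Icc 1 x, (price K b β - v l) = 0 := by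
          rw [← Finset.sum_add_distrib]; simp
        have e2 : ∑ l ∈ Finset.Icc 1 x', (v l - price K b β)
            + ∑ l ∈ Finset.Icc 1 x', (price K b β - v l) = 0 := by
          rw [← Finset.sum_add_distrib]; simp
        unfold util
        rw [← hx]
        linarith
      refine le_trans hub ?_
      unfold util
      rw [← hx']
      apply Finset.sum_le_sum
      intro l hl
      rw [Finset.mem_Icc] at hl
      have hx'1 : 1 ≤ x' := le_trans hl.1 hl.2
      -- price for b' is at most price for b
      have hp : price K b' β ≤ price K b β := by
        apply max_le
        · exact le_trans (le_of_lt hfail') hpβ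
        · have h1 : β (K - x' + 1) ≤ β (K - x') :=
            hβ (K - x') (K - x' + 1) (by omega) (by omega) (by omega)
          exact le_trans h1 hpβ
      linarith
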